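/- Let A be an assosymmetric algebra over a field of characteristic ≠ 2, 3, and let a ∈ [A,A] (i.e., a is a sum of commutators). Then the adjoint map ad a : b ↦ [a,b] is a derivation of A: [a, bc] = [a,b]c + b[a,c] for all b, c ∈ A. -/

import Mathlib

variable {K A : Type*} [Field K] [NonUnitalNonAssocRing A] [Module K A]
  [IsScalarTower K A A] [SMulCommClass K A A]

/-- associator -/
def assoc (a b c : A) : A := a * (b * c) - a * b * c
/-- commutator -/
def brk (a b : A) : A := a * b - b * a
/-- Jordan product -/
def jmul (a b : A) : A := a * b + b * a
/-- Jordan associator -/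
def jassoc (a b c : A) : A := jmul a (jmul b c) - jmul (jmul a b) c

theorem key2
    (hl : ∀ a b c : A, assoc a b c = assoc b a c)
    (hr : ∀ a b c : A, assoc a b c = assoc a c b)
    (u v x y : A) : (2:ℤ) • assoc (brk u v) x y = 0 := by
  have H0 : assoc u v x * y = (assoc v u x) * y := by rw [hl u v x]
  have H1 : y * assoc u v x = y * (assoc u x v) := by rw [hr u v x]
  have H2 : assoc u v x * y = (assoc u x v) * y := by rw [hr u v x]
  have H3 : x * assoc u v y = x * (assoc v u y) := by rw [hl u v y]
  have H4 : x * assoc u v y = x * (assoc u y v) := by rw [hr u v y]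
  have H5 : assoc u v y * x = (assoc u y v) * x := by rw [hr u v y]
  have H6 : assoc u x v * y = (assoc x u v) * y := by rw [hl u x v]
  have H7 : assoc u x y * v = (assoc x u y) * v := by rw [hl u x y]
  have H8 : assoc u x y * v = (assoc u y x) * v := by rw [hr u x y]
  have H9 : x * assoc u y v = x * (assoc y u v) := by rw [hl u y v]
  have H10 : assoc u y v * x = (assoc y u v) * x := by rw [hl u y v]
  have H11 : v * assoc u y x = v * (assoc y u x) := by rw [hl u y x]
  have H12 : assoc u y x * v = (assoc y u x) * v := by rw [hl u y x]
  have H13 : assoc v u x * y = (assoc v x u) * y := by rw [hr v u x]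
  have H14 : x * assoc v u y = x * (assoc v y u) := by rw [hr v u y]
  have H15 : assoc v u y * x = (assoc v y u) * x := by rw [hr v u y]
  have H16 : assoc v x u * y = (assoc x v u) * y := by rw [hl v x u]
  have H17 : assoc v x y * u = (assoc x v y) * u := by rw [hl v x y]
  have H18 : u * assoc v x y = u * (assoc v y x) := by rw [hr v x y]
  have H19 : v * assoc x u y = v * (assoc x y u) := by rw [hr x u y]
  have H20 : assoc x u y * v = (assoc x y u) * v := by rw [hr x u y]
  linear_combination (norm := (simp only [assoc, brk, mul_sub, sub_mul, mul_add, add_mul, smul_sub, smul_add]; abel)) (3:ℤ) • (hl (u*v) x y) - (2:ℤ) • (hr (u*v) x y) + (hr x (u*v) y) - (hl (u*v) y x) - (hl (u*x) v y) + (hr (u*x) v y) - (hr v (u*x) y) + (hl (u*x) y v) + (hr v (u*y) x) + (3:ℤ) • (hl v x (u*y)) - (3:ℤ) • (hl (v*u) x y) + (hr (v*u) x y) + (2:ℤ) • (hr (v*x) u y) + (hr u (v*x) y) + (hl u y (v*x)) - (hl (v*y) u x) + (2:ℤ) • (hr (v*y) u x) - (2:ℤ) • (hr u (v*y) x) - (2:ℤ)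 • (hl u x (v*y)) + (2:ℤ) • (hl (v*y) x u) + (2:ℤ) • (hl (x*u) v y) - (hl (x*v) u y) - (2:ℤ) • (hr (x*v) u y) - (hr u (x*v) y) - (hl u y (x*v)) + (hl (x*y) u v) - (2:ℤ) • (hr (x*y) u v) + (hr u (x*y) v) - (2:ℤ) • (hl (x*y) v u) + (hl (y*u) v x) - (2:ℤ) • (hr (y*u) v x) - (2:ℤ) • (hl v x (y*u)) - (hl (y*u) x v) + (hl u v (y*x)) - (H0) + (H1) + (2:ℤ) • (H2) - (H3) - (H4) - (H5) + (2:ℤ) • (H6) - (H7) + (H8) - (H9) - (H10) + (H11) + (H12) - (H13) + (2:ℤ) • (H14) + (H15) - (3:ℤ) • (H16) + (2:ℤ) • (H17) + (H18) - (2:ℤ) • (H19) - (H20)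

theorem stmt6 (h2 : (2 : K) ≠ 0) (h3 : (3 : K) ≠ 0)
    (hl : ∀ a b c : A, assoc a b c = assoc b a c)
    (hr : ∀ a b c : A, assoc a b c = assoc a c b)
    (a : A) (ha : a ∈ AddSubgroup.closure {x : A | ∃ y z : A, x = brk y z}) :
    ∀ b c : A, brk a (b * c) = brk a b * c + b * brk a c := by
  have hN : ∀ x y : A, assoc a x y = 0 := by
    induction ha using AddSubgroup.closure_induction with
    | mem w hw =>
      obtain ⟨p, q, rfl⟩ := hw
      intro x y
      have h := key2 hl hr p q x y
      have h' : (2 : K) • assoc (brk p q) x y = 0 := by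
        rw [show ((2:K) = ((2:ℤ) : K)) by norm_num, Int.cast_smul_eq_zsmul, h]
      have := congrArg (fun t => (2:K)⁻¹ • t) h'
      simpa [smul_smul, inv_mul_cancel₀ h2] using this
    | zero =>
      intro x y
      simp [assoc]
    | add p q hp hq ihp ihq =>
      intro x y
      have : assoc (p + q) x y = assoc p x y + assoc q x y := by
        simp only [assoc, add_mul]
        abel
      rw [this, ihp, ihq, add_zero]
    | neg p hp ihp =>
      intro x y
      have : assoc (-p) x y = - assoc p x y := by
        simp only [assoc, neg_mul]
        abel
      rw [this, ihp, neg_zero]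
  intro b c
  have e1 : assoc a b c = 0 := hN b c
  have e3 : assoc b a c = 0 := by rw [← hl]; exact hN b c
  have e2 : assoc b c a = 0 := by
    rw [hl, hr, hl, hr]; exact hN b c
  linear_combination (norm := (simp only [assoc, brk, mul_sub, sub_mul, mul_add, add_mul]; abel)) e1 + e2 - e3
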